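/- Let G be a group, K a field, A a finite-dimensional K-vector space, Σ ⊆ A^G a linear subshift, and τ : A^G → A^G a linear cellular automaton. Then τ(Σ) is a linear subshift of A^G; in particular τ(Σ) is closed in the prodiscrete topology. -/

import Mathlib

def shiftSigma (G : Type*) [Group G] {A : Type*} (D : Set G) (P : Set (D → A)) :
    Set (G → A) :=
  {x | ∀ g : G, (fun d : D => x (g * (d : G))) ∈ P}

def prodiscreteTop (G A : Type*) : TopologicalSpace (G → A) :=
  @Pi.topologicalSpace G (fun _ => A) (fun _ => ⊥)

def IsLinearSubshift (K : Type*) {G A : Type*} [Field K] [Group G] [AddCommGroup A]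
    [Module K A] (S : Set (G → A)) : Prop :=
  (∃ M : Submodule K (G → A), (M : Set (G → A)) = S) ∧
    (∀ g : G, ∀ x ∈ S, (fun h => x (g⁻¹ * h)) ∈ S) ∧
    @IsClosed _ (prodiscreteTop G A) S

def IsSFT {G A : Type*} [Group G] (S : Set (G → A)) : Prop :=
  ∃ (D : Finset G) (P : Set (↥(D : Set G) → A)), S = shiftSigma G (D : Set G) P

def IsLCA (K : Type*) {G A : Type*} [Field K] [Group G] [AddCommGroup A] [Module K A]
    (τ : (G → A) → (G → A)) : Prop :=
  IsLinearMap K τ ∧ ∃ (M : Finset G) (μ : (↥(M : Set G) → A) → A), IsLinearMap K μ ∧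
    ∀ (x : G → A) (g : G), τ x g = μ (fun m : (M : Set G) => x (g * (m : G)))

set_option linter.unusedSectionVars false

open Module

section Coset

variable (K : Type*) {V V₂ : Type*} [Field K] [AddCommGroup V] [Module K V]
  [AddCommGroup V₂] [Module K V₂]

/-- A nonempty coset of a submodule. -/
def IsNEC (s : Set V) : Prop := ∃ (a : V) (U : Submodule K V), s = {x | x - a ∈ U}

variable {K}

lemma IsNEC.nonempty {s : Set V} (h : IsNEC K s) : s.Nonempty := by
  obtain ⟨a, U, rfl⟩ := h; exact ⟨a, by simp⟩

lemma rebase {a : V} {U : Submodule K V} {b : V} (hb : b ∈ {x | x - a ∈ U}) :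
    {x | x - a ∈ U} = {x | x - b ∈ U} := by
  have hba : b - a ∈ U := hb
  ext x
  simp only [Set.mem_setOf_eq]
  constructor
  · intro h
    have h2 := U.sub_mem h hba
    have : x - a - (b - a) = x - b := by abel
    rwa [this] at h2
  · intro h
    have h2 := U.add_mem h hba
    have : x - b + (b - a) = x - a := by abel
    rwa [this] at h2

lemma IsNEC.singleton (p : V) : IsNEC K ({p} : Set V) :=
  ⟨p, ⊥, by ext x; simp [sub_eq_zero]⟩

lemma IsNEC.image (f : V →ₗ[K] V₂) {s : Set V} (h : IsNEC K s) : IsNEC K (f '' s) := by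
  obtain ⟨a, U, rfl⟩ := h
  refine ⟨f a, U.map f, ?_⟩
  ext y
  constructor
  · rintro ⟨x, hx, rfl⟩
    exact ⟨x - a, hx, by simp⟩
  · rintro ⟨u, hu, hfu⟩
    refine ⟨a + u, by simpa [Set.mem_setOf_eq] using hu, ?_⟩
    rw [map_add, hfu]; abel

lemma IsNEC.inter {s t : Set V} (hs : IsNEC K s) (ht : IsNEC K t) (hne : (s ∩ t).Nonempty) :
    IsNEC K (s ∩ t) := by
  obtain ⟨b, hbs, hbt⟩ := hne
  obtain ⟨a, U, hU⟩ := hs; obtain ⟨a', U', hU'⟩ := ht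
  subst hU; subst hU'
  rw [rebase hbs, rebase hbt]
  exact ⟨b, U ⊓ U', by ext x; simp [Set.mem_setOf_eq]⟩

lemma IsNEC.preimage (f : V →ₗ[K] V₂) {t : Set V₂} (ht : IsNEC K t) (hne : (f ⁻¹' t).Nonempty) :
    IsNEC K (f ⁻¹' t) := by
  obtain ⟨a, ha⟩ := hne
  obtain ⟨b, U, hU⟩ := ht
  subst hU
  rw [rebase ha]
  refine ⟨a, U.comap f, ?_⟩
  ext x
  simp [Set.mem_setOf_eq, map_sub]

/-- A directed (under reverse inclusion) family of nonempty cosets in a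
finite-dimensional space has a minimum. -/
lemma exists_min_coset [FiniteDimensional K V] (𝒟 : Set (Set V)) (h0 : 𝒟.Nonempty)
    (hc : ∀ s ∈ 𝒟, IsNEC K s) (hdir : ∀ s ∈ 𝒟, ∀ t ∈ 𝒟, ∃ u ∈ 𝒟, u ⊆ s ∧ u ⊆ t) :
    ∃ D ∈ 𝒟, ∀ C ∈ 𝒟, D ⊆ C := by
  set N : Set ℕ := {n | ∃ C ∈ 𝒟, ∃ (a : V) (U : Submodule K V), C = {x | x - a ∈ U} ∧ finrank K U = n} with hNdef
  have hN : N.Nonempty := by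
    obtain ⟨C, hC⟩ := h0
    obtain ⟨a, U, h⟩ := hc C hC
    exact ⟨_, C, hC, a, U, h, rfl⟩
  obtain ⟨C0, hC0, a, W, hCW, hrank⟩ := Nat.sInf_mem hN
  refine ⟨C0, hC0, fun C hC => ?_⟩
  obtain ⟨B, hB, hBC0, hBC⟩ := hdir C0 hC0 C hC
  obtain ⟨a', U, hBU⟩ := hc B hB
  have hbB : a' ∈ B := by rw [hBU]; simp
  have hC02 : C0 = {x | x - a' ∈ W} := by rw [hCW]; exact rebase (by rw [← hCW]; exact hBC0 hbB)
  have hUW : U ≤ W := by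
    intro u hu
    have h1 : a' + u ∈ B := by
      rw [hBU]; simp only [Set.mem_setOf_eq]; simpa using hu
    have h2 := hBC0 h1
    rw [hC02] at h2
    simpa using h2
  have hle : finrank K W ≤ finrank K U := by
    rw [hrank]; exact Nat.sInf_le ⟨B, hB, a', U, hBU, rfl⟩
  have hUWeq : U = W := Submodule.eq_of_le_of_finrank_le hUW hle
  have : C0 = B := by rw [hC02, ← hUWeq, ← hBU]
  rw [this]; exact hBC

end Coset

/-- Zorn's lemma for minimal elements. -/
lemma zorn_min {α : Type*} [Preorder α] (s : Set α)
    (ih : ∀ c ⊆ s, IsChain (· ≤ ·) c → ∀ y ∈ c, ∃ lb ∈ s, ∀ z ∈ c, lb ≤ z)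
    (x : α) (hx : x ∈ s) : ∃ m, m ≤ x ∧ m ∈ s ∧ ∀ z ∈ s, z ≤ m → m ≤ z := by
  obtain ⟨m, hm1, hm2⟩ :=
    zorn_le_nonempty₀ (α := αᵒᵈ) s (fun c hc hchain y hy => ih c hc hchain.symm y hy) x hx
  exact ⟨m, hm1, hm2.1, fun z hz hzm => hm2.2 hz hzm⟩

section Fam

variable (K : Type*) {G A : Type*} [Field K] [Group G] [AddCommGroup A] [Module K A]

/-- Restriction between finite windows. -/
def resF {E E' : Finset G} (_h : E ⊆ E') : (↥(E' : Set G) → A) →ₗ[K] (↥(E : Set G) → A) :=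
  LinearMap.funLeft K A (fun e => ⟨e.1, _h e.2⟩)

/-- Restriction from the full configuration space. -/
def resG (E : Finset G) : (G → A) →ₗ[K] (↥(E : Set G) → A) :=
  LinearMap.funLeft K A Subtype.val

lemma resF_resG {E E' : Finset G} (h : E ⊆ E') (x : G → A) :
    resF K h (resG K E' x) = resG K E x := rfl

lemma resF_resF {E E' E'' : Finset G} (h : E ⊆ E') (h' : E' ⊆ E'') (x : ↥(E'' : Set G) → A) :
    resF K h (resF K h' x) = resF K (h.trans h') x := rfl

lemma resF_refl {E : Finset G} (x : ↥(E : Set G) → A) : resF K (subset_refl E) x = x := rfl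

lemma resF_refl_image {E : Finset G} (s : Set (↥(E : Set G) → A)) :
    resF K (subset_refl E) '' s = s := by
  have : ∀ h : E ⊆ E, ⇑(resF (A := A) K h) = id := fun h => rfl
  rw [this, Set.image_id]

lemma resF_image_image {E E' E'' : Finset G} (h : E ⊆ E') (h' : E' ⊆ E'')
    (s : Set (↥(E'' : Set G) → A)) :
    resF K h '' (resF K h' '' s) = resF K (h.trans h') '' s := by
  rw [← Set.image_comp]; rfl

lemma resF_image_resG_image {E E' : Finset G} (h : E ⊆ E') (s : Set (G → A)) :
    resF K h '' (resG K E' '' s) = resG K E '' s := by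
  rw [← Set.image_comp]; rfl

/-- A coherent family of nonempty cosets sitting inside the family `D`. -/
def GoodFam (D B : ∀ E : Finset G, Set (↥(E : Set G) → A)) : Prop :=
  (∀ E, IsNEC K (B E) ∧ B E ⊆ D E) ∧
    ∀ (E E' : Finset G) (h : E ⊆ E'), resF K h '' B E' ⊆ B E

variable {K}

lemma push {B : ∀ E : Finset G, Set (↥(E : Set G) → A)}
    (hcoh : ∀ (E E' : Finset G) (h : E ⊆ E'), resF K h '' B E' ⊆ B E)
    {E E' E'' : Finset G} (h1 : E ⊆ E') (h2 : E' ⊆ E'') (h3 : E ⊆ E'') :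
    resF K h3 '' B E'' ⊆ resF K h1 '' B E' := by
  rintro - ⟨x, hx, rfl⟩
  refine ⟨resF K h2 x, hcoh _ _ h2 ⟨x, hx, rfl⟩, ?_⟩
  rfl

variable [FiniteDimensional K A]

/-- Zorn: there is a minimal good family below any good family. -/
lemma exists_minimal_good (D : ∀ E : Finset G, Set (↥(E : Set G) → A))
    (hD : GoodFam K D D) :
    ∃ B, GoodFam K D B ∧ (∀ B', GoodFam K D B' → (∀ E, B' E ⊆ B E) → ∀ E, B E ⊆ B' E) := by
  have ih : ∀ c ⊆ {B | GoodFam K D B}, IsChain (· ≤ ·) c → ∀ y ∈ c,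
      ∃ lb ∈ {B | GoodFam K D B}, ∀ z ∈ c, lb ≤ z := by
    intro c hcs hchain y hy
    -- lower bound of a nonempty chain: pointwise minimum
    have hmin : ∀ E : Finset G, ∃ s ∈ (fun fam => fam E) '' c, ∀ t ∈ (fun fam => fam E) '' c, s ⊆ t := by
      intro E
      apply exists_min_coset (K := K)
      · exact ⟨y E, ⟨y, hy, rfl⟩⟩
      · rintro - ⟨fam, hfam, rfl⟩; exact ((hcs hfam).1 E).1
      · rintro - ⟨f1, hf1, rfl⟩ - ⟨f2, hf2, rfl⟩
        rcases eq_or_ne f1 f2 with rfl | hne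
        · exact ⟨f1 E, ⟨f1, hf1, rfl⟩, subset_rfl, subset_rfl⟩
        · rcases hchain hf1 hf2 hne with h | h
          · exact ⟨f1 E, ⟨f1, hf1, rfl⟩, subset_rfl, h E⟩
          · exact ⟨f2 E, ⟨f2, hf2, rfl⟩, h E, subset_rfl⟩
    choose lb hlbmem hlbmin using hmin
    refine ⟨lb, ⟨⟨fun E => ?_, fun E E' h => ?_⟩, fun fam hfam E => hlbmin E _ ⟨fam, hfam, rfl⟩⟩⟩
    · obtain ⟨fam, hfam, heq⟩ := hlbmem E
      constructor
      · rw [← heq]; exact ((hcs hfam).1 E).1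
      · rw [← heq]; exact ((hcs hfam).1 E).2
    · -- coherence of the pointwise minimum
      obtain ⟨f1, hf1, he1⟩ := hlbmem E'
      obtain ⟨f2, hf2, he2⟩ := hlbmem E
      rcases eq_or_ne f1 f2 with rfl | hne
      · rw [← he1, ← he2]; exact (hcs hf1).2 E E' h
      · rcases hchain hf1 hf2 hne with hc12 | hc21
        · rw [← he1, ← he2]
          exact le_trans ((hcs hf1).2 E E' h) (hc12 E)
        · have : lb E' ⊆ f2 E' := hlbmin E' _ ⟨f2, hf2, rfl⟩
          rw [← he2]
          exact le_trans (Set.image_mono this) ((hcs hf2).2 E E' h)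

  obtain ⟨m, -, hm, hmin⟩ := zorn_min {B | GoodFam K D B} ih D hD
  exact ⟨m, hm, fun B' hB' hle => hmin B' hB' hle⟩

lemma push2 {B : ∀ E : Finset G, Set (↥(E : Set G) → A)}
    (hcoh : ∀ (E E' : Finset G) (h : E ⊆ E'), resF K h '' B E' ⊆ B E)
    {E E' E1 E2 : Finset G} (h : E1 ⊆ E2) (hE1 : E ⊆ E1) (hE2 : E ⊆ E2)
    (h1 : E' ⊆ E1) (h2 : E' ⊆ E2) (p : ↥(E : Set G) → A) :
    resF K h2 '' (B E2 ∩ (resF K hE2) ⁻¹' {p}) ⊆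
      resF K h1 '' (B E1 ∩ (resF K hE1) ⁻¹' {p}) := by
  rintro - ⟨x, ⟨hxB, hxp⟩, rfl⟩
  exact ⟨resF K h x, ⟨hcoh _ _ h ⟨x, hxB, rfl⟩, hxp⟩, rfl⟩

lemma minimal_good_surj (D B : ∀ E : Finset G, Set (↥(E : Set G) → A))
    (hB : GoodFam K D B)
    (hmin : ∀ B', GoodFam K D B' → (∀ E, B' E ⊆ B E) → ∀ E, B E ⊆ B' E) :
    ∀ (E E' : Finset G) (h : E ⊆ E'), B E ⊆ resF K h '' B E' := by
  classical
  have hex : ∀ E : Finset G, ∃ s : Set (↥(E : Set G) → A),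
      (∃ (E' : Finset G) (h : E ⊆ E'), s = resF K h '' B E') ∧
      ∀ (E' : Finset G) (h : E ⊆ E'), s ⊆ resF K h '' B E' := by
    intro E
    obtain ⟨s, hs, hsmin⟩ := exists_min_coset (K := K)
        {s | ∃ (E' : Finset G) (h : E ⊆ E'), s = resF K h '' B E'}
        ⟨B E, E, subset_refl E, (resF_refl_image K _).symm⟩
        (by rintro - ⟨E', h, rfl⟩; exact ((hB.1 E').1).image _)
        (by
          rintro - ⟨E1, h1, rfl⟩ - ⟨E2, h2, rfl⟩
          refine ⟨resF K (h1.trans Finset.subset_union_left) '' B (E1 ∪ E2),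
            ⟨E1 ∪ E2, h1.trans Finset.subset_union_left, rfl⟩, ?_, ?_⟩
          · exact push hB.2 h1 Finset.subset_union_left _
          · exact push hB.2 h2 Finset.subset_union_right _)
    exact ⟨s, hs, fun E' h => hsmin _ ⟨E', h, rfl⟩⟩
  choose B' hB'rep hB'min using hex
  have hB'leB : ∀ E, B' E ⊆ B E := by
    intro E
    have := hB'min E E (subset_refl E)
    rwa [resF_refl_image K] at this
  have hgood : GoodFam K D B' := by
    constructor
    · intro E
      obtain ⟨E', h, heq⟩ := hB'rep E
      exact ⟨heq ▸ ((hB.1 E').1).image _, (hB'leB E).trans (hB.1 E).2⟩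
    · intro E1 E2 h
      obtain ⟨Ehat, hH, heq⟩ := hB'rep E1
      calc resF K h '' B' E2
          ⊆ resF K h '' (resF K (Finset.subset_union_right : E2 ⊆ Ehat ∪ E2) '' B (Ehat ∪ E2)) :=
            Set.image_mono (hB'min E2 _ _)
        _ = resF K (h.trans Finset.subset_union_right) '' B (Ehat ∪ E2) :=
            resF_image_image K _ _ _
        _ ⊆ resF K hH '' B Ehat := push hB.2 hH Finset.subset_union_left _
        _ = B' E1 := heq.symm
  intro E E' h
  exact (hmin B' hgood hB'leB E).trans (hB'min E E' h)

lemma minimal_good_subsingleton (D B : ∀ E : Finset G, Set (↥(E : Set G) → A))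
    (hB : GoodFam K D B)
    (hmin : ∀ B', GoodFam K D B' → (∀ E, B' E ⊆ B E) → ∀ E, B E ⊆ B' E) :
    ∀ E : Finset G, (B E).Subsingleton := by
  classical
  have hsurj := minimal_good_surj D B hB hmin
  have key : ∀ (E : Finset G), ∀ p ∈ B E, B E ⊆ {p} := by
    intro E p hp
    have hex : ∀ E' : Finset G, ∃ s : Set (↥(E' : Set G) → A),
        (∃ (E'' : Finset G) (h : E' ⊆ E'') (hE : E ⊆ E''),
          s = resF K h '' (B E'' ∩ (resF K hE) ⁻¹' {p})) ∧
        ∀ (E'' : Finset G) (h : E' ⊆ E'') (hE : E ⊆ E''),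
          s ⊆ resF K h '' (B E'' ∩ (resF K hE) ⁻¹' {p}) := by
      intro E'
      have hne : ∀ (E'' : Finset G) (hE : E ⊆ E''), (B E'' ∩ (resF K hE) ⁻¹' {p}).Nonempty := by
        intro E'' hE
        obtain ⟨b, hb, hbp⟩ := hsurj E E'' hE hp
        exact ⟨b, hb, hbp⟩
      have hnec : ∀ (E'' : Finset G) (hE : E ⊆ E''),
          IsNEC K (B E'' ∩ (resF K hE) ⁻¹' {p}) := by
        intro E'' hE
        obtain ⟨b, hb1, hb2⟩ := hne E'' hE
        exact ((hB.1 E'').1).inter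
          (IsNEC.preimage _ (IsNEC.singleton p) ⟨b, hb2⟩) ⟨b, hb1, hb2⟩
      obtain ⟨s, hs, hsmin⟩ := exists_min_coset (K := K)
          {s | ∃ (E'' : Finset G) (h : E' ⊆ E'') (hE : E ⊆ E''),
            s = resF K h '' (B E'' ∩ (resF K hE) ⁻¹' {p})}
          ⟨_, E' ∪ E, Finset.subset_union_left, Finset.subset_union_right, rfl⟩
          (by rintro - ⟨E'', h, hE, rfl⟩; exact (hnec E'' hE).image _)
          (by
            rintro - ⟨E1, h1, hE1, rfl⟩ - ⟨E2, h2, hE2, rfl⟩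
            refine ⟨_, ⟨E1 ∪ E2, h1.trans Finset.subset_union_left,
              hE1.trans Finset.subset_union_left, rfl⟩, ?_, ?_⟩
            · exact push2 hB.2 Finset.subset_union_left _ _ _ _ p
            · exact push2 hB.2 Finset.subset_union_right _ _ _ _ p)
      exact ⟨s, hs, fun E'' h hE => hsmin _ ⟨E'', h, hE, rfl⟩⟩
    choose C' hC'rep hC'min using hex
    have hC'leB : ∀ E', C' E' ⊆ B E' := by
      intro E'
      calc C' E' ⊆ resF K (Finset.subset_union_left : E' ⊆ E' ∪ E) ''
            (B (E' ∪ E) ∩ (resF K (Finset.subset_union_right : E ⊆ E' ∪ E)) ⁻¹' {p}) :=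
            hC'min E' _ _ _
        _ ⊆ resF K Finset.subset_union_left '' B (E' ∪ E) :=
            Set.image_mono Set.inter_subset_left
        _ ⊆ B E' := hB.2 _ _ _
    have hgood : GoodFam K D C' := by
      constructor
      · intro E'
        obtain ⟨E'', h, hE, heq⟩ := hC'rep E'
        refine ⟨heq ▸ ?_, (hC'leB E').trans (hB.1 E').2⟩
        obtain ⟨b, hb, hbp⟩ := hsurj E E'' hE hp
        exact (((hB.1 E'').1).inter
          (IsNEC.preimage _ (IsNEC.singleton p) ⟨b, hbp⟩)
          ⟨b, hb, hbp⟩).image _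
      · intro E1 E2 h
        obtain ⟨Ehat, hH1, hHE, heq⟩ := hC'rep E1
        calc resF K h '' C' E2
            ⊆ resF K h '' (resF K (Finset.subset_union_right : E2 ⊆ Ehat ∪ E2) ''
              (B (Ehat ∪ E2) ∩ (resF K (hHE.trans Finset.subset_union_left :
                E ⊆ Ehat ∪ E2)) ⁻¹' {p})) :=
              Set.image_mono (hC'min E2 _ _ _)
          _ = resF K (h.trans Finset.subset_union_right) ''
              (B (Ehat ∪ E2) ∩ (resF K (hHE.trans Finset.subset_union_left)) ⁻¹' {p}) :=
              resF_image_image K _ _ _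
          _ ⊆ resF K hH1 '' (B Ehat ∩ (resF K hHE) ⁻¹' {p}) :=
              push2 hB.2 Finset.subset_union_left _ _ _ _ p
          _ = C' E1 := heq.symm
    have hBleC' := hmin C' hgood hC'leB
    intro q hq
    have hq2 : q ∈ C' E := hBleC' E hq
    have hq3 := hC'min E E (subset_refl E) (subset_refl E) hq2
    obtain ⟨x, ⟨-, hx2⟩, rfl⟩ := hq3
    exact hx2
  intro E q hq q' hq'
  exact key E q' hq' hq

end Fam


theorem closed_image_aux {G K A : Type*} [Group G] [Field K] [AddCommGroup A] [Module K A]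
    [FiniteDimensional K A] (S : Set (G → A)) (hlin : IsLinearSubshift K S)
    (τ : (G → A) → (G → A)) (hτ : IsLCA K τ) :
    @IsClosed _ (prodiscreteTop G A) (τ '' S) := by
  classical
  letI : TopologicalSpace A := ⊥
  haveI : DiscreteTopology A := ⟨rfl⟩
  have htop : prodiscreteTop G A = Pi.topologicalSpace := rfl
  rw [htop, ← closure_subset_iff_isClosed]
  intro y hy
  obtain ⟨S₀, hS₀⟩ := hlin.1
  have hSclosed : IsClosed S := hlin.2.2
  obtain ⟨hτlin, M, μ, hμ, hloc⟩ := hτ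
  set τL := IsLinearMap.mk' τ hτlin with hτL
  -- basic open sets
  have hUopen : ∀ (E : Finset G) (z : G → A), IsOpen {w : G → A | ∀ g ∈ E, w g = z g} := by
    intro E z
    have : {w : G → A | ∀ g ∈ E, w g = z g} = ⋂ g ∈ E, (fun w : G → A => w g) ⁻¹' {z g} := by
      ext w; simp
    rw [this]
    exact isOpen_biInter_finset fun g _ =>
      (continuous_apply g).isOpen_preimage _ (isOpen_discrete _)
  -- the approximating sets
  set C : Finset G → Set (G → A) := fun F => {x | x ∈ S ∧ ∀ g ∈ F, τ x g = y g} with hCdef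
  have hCne : ∀ F, (C F).Nonempty := by
    intro F
    obtain ⟨w, hw1, x, hx, rfl⟩ :=
      mem_closure_iff.mp hy _ (hUopen F y) (fun g _ => rfl)
    exact ⟨x, hx, fun g hg => hw1 g hg⟩
  have hCclosed : ∀ F, IsClosed (C F) := by
    intro F
    have heq : C F = S ∩ ⋂ g ∈ F,
        (fun x : G → A => fun m : ↥(M : Set G) => x (g * m)) ⁻¹' {v | μ v = y g} := by
      ext x
      simp only [hCdef, Set.mem_setOf_eq, Set.mem_inter_iff, Set.mem_iInter,
        Set.mem_preimage]
      constructor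
      · rintro ⟨h1, h2⟩
        exact ⟨h1, fun g hg => by rw [← hloc x g]; exact h2 g hg⟩
      · rintro ⟨h1, h2⟩
        exact ⟨h1, fun g hg => by rw [hloc x g]; exact h2 g hg⟩
    rw [heq]
    refine hSclosed.inter (isClosed_biInter fun g _ => ?_)
    haveI : DiscreteTopology (↥(M : Set G) → A) := Pi.discreteTopology
    exact (isClosed_discrete _).preimage (continuous_pi fun m => continuous_apply _)
  have hCcoset : ∀ F, IsNEC K (C F) := by
    intro F
    obtain ⟨a, haS, hay⟩ := hCne F
    have haS₀ : a ∈ S₀ := by rw [← SetLike.mem_coe, hS₀]; exact haS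
    refine ⟨a, S₀ ⊓ ⨅ g ∈ F, LinearMap.ker ((LinearMap.proj g).comp τL), ?_⟩
    ext x
    simp only [hCdef, Set.mem_setOf_eq, Submodule.mem_inf, Submodule.mem_iInf,
      LinearMap.mem_ker, LinearMap.comp_apply, LinearMap.proj_apply]
    have hsub : ∀ (g : G), τL (x - a) g = τ x g - τ a g := by
      intro g; rw [map_sub]; rfl
    constructor
    · rintro ⟨hxS, hxy⟩
      have hxS₀ : x ∈ S₀ := by rw [← SetLike.mem_coe, hS₀]; exact hxS
      refine ⟨S₀.sub_mem hxS₀ haS₀, fun g hg => ?_⟩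
      rw [hsub g, hxy g hg, hay g hg, sub_self]
    · rintro ⟨hxa, hker⟩
      have hxS₀ : x ∈ S₀ := by
        have := S₀.add_mem hxa haS₀
        rwa [sub_add_cancel] at this
      refine ⟨by rw [← hS₀]; exact hxS₀, fun g hg => ?_⟩
      have := hker g hg
      rw [hsub g, sub_eq_zero] at this
      rw [this, hay g hg]
  have hCmono : ∀ F1 F2 : Finset G, F1 ⊆ F2 → C F2 ⊆ C F1 :=
    fun F1 F2 h x hx => ⟨hx.1, fun g hg => hx.2 g (h hg)⟩
  -- the limit family D
  have hDex : ∀ E : Finset G, ∃ s : Set (↥(E : Set G) → A),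
      (∃ F, s = resG K E '' C F) ∧ ∀ F, s ⊆ resG K E '' C F := by
    intro E
    obtain ⟨s, hs, hsmin⟩ := exists_min_coset (K := K) {s | ∃ F, s = resG K E '' C F}
      ⟨_, ∅, rfl⟩
      (by rintro - ⟨F, rfl⟩; exact (hCcoset F).image _)
      (by
        rintro - ⟨F1, rfl⟩ - ⟨F2, rfl⟩
        exact ⟨_, ⟨F1 ∪ F2, rfl⟩,
          Set.image_mono (hCmono F1 _ Finset.subset_union_left),
          Set.image_mono (hCmono F2 _ Finset.subset_union_right)⟩)
    exact ⟨s, hs, fun F => hsmin _ ⟨F, rfl⟩⟩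
  choose D hDrep hDmin using hDex
  have hDgood : GoodFam K D D := by
    refine ⟨fun E => ⟨?_, subset_rfl⟩, ?_⟩
    · obtain ⟨F, heq⟩ := hDrep E; rw [heq]; exact (hCcoset F).image _
    · intro E E' h
      obtain ⟨F0, heq⟩ := hDrep E
      calc resF K h '' D E'
          ⊆ resF K h '' (resG K E' '' C F0) := Set.image_mono (hDmin E' F0)
        _ = resG K E '' C F0 := resF_image_resG_image K h _
        _ = D E := heq.symm
  obtain ⟨B, hBgood, hBmin⟩ := exists_minimal_good D hDgood
  have hBsing := minimal_good_subsingleton D B hBgood hBmin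
  have hBne : ∀ E, (B E).Nonempty := fun E => ((hBgood.1 E).1).nonempty
  choose b hb using hBne
  have hgmem : ∀ g : G, g ∈ (({g} : Finset G) : Set G) :=
    fun g => Finset.mem_coe.mpr (Finset.mem_singleton_self g)
  set x : G → A := fun g => b {g} ⟨g, hgmem g⟩ with hxdef
  have hres : ∀ E : Finset G, resG K E x = b E := by
    intro E
    funext e
    have hsub : ({e.1} : Finset G) ⊆ E :=
      Finset.singleton_subset_iff.mpr (Finset.mem_coe.mp e.2)
    have h1 : resF K hsub (b E) ∈ B {e.1} := hBgood.2 _ _ hsub ⟨b E, hb E, rfl⟩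
    have h2 : resF K hsub (b E) = b {e.1} := hBsing {e.1} h1 (hb _)
    have h3 : b ({e.1} : Finset G) ⟨e.1, hgmem e.1⟩ = b E e := by
      rw [← h2]; rfl
    exact h3
  have hxC : ∀ F, x ∈ C F := by
    intro F
    by_contra hxF
    obtain ⟨I, u, hIu, hpi⟩ := isOpen_pi_iff.mp (hCclosed F).isOpen_compl x hxF
    have hxB : resG K I x ∈ D I := (hBgood.1 I).2 (by rw [hres I]; exact hb I)
    obtain ⟨c, hc, hceq⟩ := hDmin I F hxB
    have hcpi : c ∈ (I : Set G).pi u := by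
      intro g hg
      have hcg : c g = x g := congrFun hceq ⟨g, hg⟩
      rw [hcg]
      exact (hIu g (Finset.mem_coe.mp hg)).2
    exact (hpi hcpi) hc
  have hxS : x ∈ S := (hxC ∅).1
  have hτx : τ x = y := by
    funext g
    exact (hxC {g}).2 g (Finset.mem_singleton_self g)
  exact ⟨x, hxS, hτx⟩

theorem stmt13 {G K A : Type*} [Group G] [Field K] [AddCommGroup A] [Module K A]
    [FiniteDimensional K A] (S : Set (G → A)) (hlin : IsLinearSubshift K S)
    (τ : (G → A) → (G → A)) (hτ : IsLCA K τ) :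
    IsLinearSubshift K (τ '' S) := by

  obtain ⟨⟨S₀, hS₀⟩, hshift, hclosed⟩ := hlin
  refine ⟨⟨S₀.map (IsLinearMap.mk' τ hτ.1), ?_⟩, ?_, ?_⟩
  · rw [Submodule.map_coe, hS₀]; rfl
  · rintro g - ⟨x, hx, rfl⟩
    obtain ⟨M, μ, hμ, hloc⟩ := hτ.2
    refine ⟨fun h => x (g⁻¹ * h), hshift g x hx, ?_⟩
    funext h
    rw [hloc, hloc]
    congr 1
    funext m
    rw [mul_assoc]
  · exact closed_image_aux S ⟨⟨S₀, hS₀⟩, hshift, hclosed⟩ τ hτ
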